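/- Let g, h ∈ C[X,Y] be linearly independent homogeneous binary forms of degree d. Then the set of (λ:μ) ∈ P^1 such that λ g^2 + μ h^2 is a square of a degree-d form has cardinality at most 3. Equivalently, the image of the quadratic Veronese map q : P_d → P_{2d}, sending a degree-d binary form to its square (up to scalar), contains no four collinear points. -/

import Mathlib

open MvPolynomial

namespace Stmt7Aux

variable {σ : Type*} [DecidableEq σ]

lemma coeff_pderiv {R : Type*} [CommSemiring R] (j : σ) (m : σ →₀ ℕ)
    (f : MvPolynomial σ R) :
    coeff m (pderiv j f) = (m j + 1) * coeff (m + Finsupp.single j 1) f := by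
  induction f using MvPolynomial.induction_on' with
  | add p q hp hq => simp [hp, hq, mul_add]
  | monomial s c =>
    rw [pderiv_monomial, coeff_monomial, coeff_monomial]
    by_cases hsm : s = m + Finsupp.single j 1
    · subst hsm
      rw [if_pos (by simp), if_pos rfl]
      simp [mul_comm]
    · rw [if_neg hsm]
      by_cases hs : s - Finsupp.single j 1 = m
      · by_cases hj : s j = 0
        · simp [hj]
        · exfalso
          apply hsm
          rw [← hs, tsub_add_cancel_of_le]
          rwa [Finsupp.single_le_iff, Nat.one_le_iff_ne_zero]
      · rw [if_neg hs, mul_zero]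

end Stmt7Aux

namespace Stmt7Aux2
open Stmt7Aux
variable {σ : Type*} [DecidableEq σ]

lemma degree_sum_add (m : σ →₀ ℕ) (j : σ) :
    ((m + Finsupp.single j 1).sum fun _ e => e) = (m.sum fun _ e => e) + 1 := by
  rw [Finsupp.sum_add_index' (fun _ => rfl) (fun _ _ _ => rfl),
    Finsupp.sum_single_index rfl]

lemma totalDegree_pderiv_lt {f : MvPolynomial σ ℂ} {j : σ} (h : pderiv j f ≠ 0) :
    (pderiv j f).totalDegree < f.totalDegree := by
  have key : ∀ m ∈ (pderiv j f).support, (m.sum fun _ e => e) < f.totalDegree := by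
    intro m hm
    rw [mem_support_iff, Stmt7Aux.coeff_pderiv] at hm
    have h2 : m + Finsupp.single j 1 ∈ f.support := by
      rw [mem_support_iff]
      intro h0
      rw [h0, mul_zero] at hm
      exact hm rfl
    have h3 := le_totalDegree h2
    rw [degree_sum_add] at h3
    omega
  obtain ⟨m₀, hm₀⟩ := (support_nonempty.2 h)
  have hpos : 0 < f.totalDegree := lt_of_le_of_lt (Nat.zero_le _) (key m₀ hm₀)
  rw [totalDegree]
  rw [Finset.sup_lt_iff hpos]
  exact key

lemma pderiv_ne_zero {f : MvPolynomial σ ℂ} {m : σ →₀ ℕ} {j : σ}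
    (hm : m ∈ f.support) (hj : m j ≠ 0) : pderiv j f ≠ 0 := by
  intro h0
  have h1 : coeff (m - Finsupp.single j 1) (pderiv j f) = 0 := by rw [h0]; simp
  rw [Stmt7Aux.coeff_pderiv] at h1
  have hle : Finsupp.single j 1 ≤ m := by
    rwa [Finsupp.single_le_iff, Nat.one_le_iff_ne_zero]
  rw [tsub_add_cancel_of_le hle] at h1
  rw [mem_support_iff] at hm
  rcases mul_eq_zero.1 h1 with h2 | h2
  · have h3 : ((m - Finsupp.single j 1 : σ →₀ ℕ) j + 1 : ℕ) = 0 := by exact_mod_cast h2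
    omega
  · exact hm h2

lemma exists_pderiv_ne_zero {f : MvPolynomial σ ℂ} (hf : f.totalDegree ≠ 0) :
    ∃ j, pderiv j f ≠ 0 := by
  have hf0 : f ≠ 0 := by rintro rfl; simp at hf
  obtain ⟨m, hm, hsum⟩ := Finset.exists_mem_eq_sup f.support (support_nonempty.2 hf0)
      (fun s => s.sum fun _ e => e)
  rw [totalDegree] at hf
  rw [hsum] at hf
  have : ∃ j, m j ≠ 0 := by
    by_contra hc
    push_neg at hc
    apply hf
    rw [Finsupp.sum]
    exact Finset.sum_eq_zero fun i _ => hc i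
  obtain ⟨j, hj⟩ := this
  exact ⟨j, pderiv_ne_zero hm hj⟩

end Stmt7Aux2

namespace Stmt7Aux3
variable {σ : Type*}

lemma hc_top_ne_zero {p : MvPolynomial σ ℂ} (hp : p ≠ 0) :
    homogeneousComponent p.totalDegree p ≠ 0 := by
  obtain ⟨m, hm, hsum⟩ := Finset.exists_mem_eq_sup p.support (support_nonempty.2 hp)
      (fun s => s.sum fun _ e => e)
  intro h0
  have hc := coeff_homogeneousComponent (n := p.totalDegree) m (φ := p)
  rw [h0] at hc
  have hds : Finsupp.degree m = m.sum fun _ e => e := by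
    rw [Finsupp.degree, Finsupp.sum]; rfl
  have hdeg : Finsupp.degree m = p.totalDegree := by
    rw [hds, MvPolynomial.totalDegree]; exact hsum.symm
  rw [if_pos hdeg] at hc
  exact (mem_support_iff.1 hm) hc.symm

lemma hc_top_mul (p q : MvPolynomial σ ℂ) :
    homogeneousComponent (p.totalDegree + q.totalDegree) (p * q) =
      homogeneousComponent p.totalDegree p * homogeneousComponent q.totalDegree q := by
  set a := p.totalDegree with ha
  set b := q.totalDegree with hb
  calc homogeneousComponent (a + b) (p * q)
      = homogeneousComponent (a + b) ((∑ i ∈ Finset.range (a + 1), homogeneousComponent i p) *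
          (∑ j ∈ Finset.range (b + 1), homogeneousComponent j q)) := by
        rw [sum_homogeneousComponent, sum_homogeneousComponent]
    _ = ∑ i ∈ Finset.range (a + 1), ∑ j ∈ Finset.range (b + 1),
          homogeneousComponent (a + b) (homogeneousComponent i p * homogeneousComponent j q) := by
        rw [Finset.sum_mul_sum, map_sum]
        exact Finset.sum_congr rfl fun i _ => map_sum _ _ _
    _ = ∑ i ∈ Finset.range (a + 1), ∑ j ∈ Finset.range (b + 1),
          (if a + b = i + j then homogeneousComponent i p * homogeneousComponent j q else 0) := by
        refine Finset.sum_congr rfl fun i _ => Finset.sum_congr rfl fun j _ => ?_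
        exact homogeneousComponent_of_mem ((mem_homogeneousSubmodule _ _).2
          ((homogeneousComponent_isHomogeneous i p).mul (homogeneousComponent_isHomogeneous j q)))
    _ = homogeneousComponent a p * homogeneousComponent b q := by
        rw [Finset.sum_eq_single_of_mem a (Finset.self_mem_range_succ a)]
        · rw [Finset.sum_eq_single_of_mem b (Finset.self_mem_range_succ b), if_pos rfl]
          intro j hj hjb
          rw [if_neg]
          rw [Finset.mem_range] at hj
          omega
        · intro i hi hia
          apply Finset.sum_eq_zero
          intro j hj
          rw [if_neg]
          rw [Finset.mem_range] at hi hj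
          omega

lemma totalDegree_mul_eq {p q : MvPolynomial σ ℂ} (hp : p ≠ 0) (hq : q ≠ 0) :
    (p * q).totalDegree = p.totalDegree + q.totalDegree := by
  refine le_antisymm (totalDegree_mul p q) ?_
  by_contra hlt
  push_neg at hlt
  have h1 : homogeneousComponent (p.totalDegree + q.totalDegree) (p * q) ≠ 0 := by
    rw [hc_top_mul]
    exact mul_ne_zero (hc_top_ne_zero hp) (hc_top_ne_zero hq)
  exact h1 (homogeneousComponent_eq_zero _ _ hlt)

lemma totalDegree_le_of_dvd {p q : MvPolynomial σ ℂ} (h : p ∣ q) (hq : q ≠ 0) :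
    p.totalDegree ≤ q.totalDegree := by
  obtain ⟨c, rfl⟩ := h
  have hp : p ≠ 0 := fun h0 => hq (by rw [h0, zero_mul])
  have hc : c ≠ 0 := fun h0 => hq (by rw [h0, mul_zero])
  rw [totalDegree_mul_eq hp hc]
  exact Nat.le_add_right _ _

end Stmt7Aux3

namespace Stmt7Core
open Stmt7Aux Stmt7Aux2 Stmt7Aux3

local notation "R" => MvPolynomial (Fin 2) ℂ

lemma eq_C_of_tot_zero {p : R} (h : p.totalDegree = 0) : p = C (coeff 0 p) := by
  have hs := sum_homogeneousComponent p
  rw [h, Finset.sum_range_one, homogeneousComponent_zero] at hs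
  exact hs.symm

lemma sq_indep {g h : R} (hg0 : g ≠ 0) (hh0 : h ≠ 0)
    (hpair : ∀ s t : ℂ, s • g + t • h = 0 → s = 0 ∧ t = 0)
    {a b : ℂ} (hab : C a * g ^ 2 + C b * h ^ 2 = 0) : a = 0 ∧ b = 0 := by
  by_cases ha : a = 0
  · subst ha
    refine ⟨rfl, ?_⟩
    rw [map_zero, zero_mul, zero_add] at hab
    rcases mul_eq_zero.1 hab with h1 | h1
    · exact (C_injective _ _) (by rw [h1, map_zero])
    · exact absurd (pow_eq_zero_iff two_ne_zero |>.1 h1) hh0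
  · exfalso
    obtain ⟨c, hc⟩ : ∃ c : ℂ, c ^ 2 = -b / a := IsAlgClosed.exists_pow_nat_eq _ two_pos
    have hsq : g ^ 2 = (C c * h) ^ 2 := by
      have hac : a * c ^ 2 = -b := by rw [hc]; field_simp
      apply mul_left_cancel₀ (show (C a : R) ≠ 0 from fun h0 => ha (C_injective _ _ (by rw [h0, map_zero])))
      have hCC : (C a : R) * C (c ^ 2) = C (-b) := by rw [← map_mul, hac]
      calc C a * g ^ 2 = - (C b * h ^ 2) := by linear_combination hab
        _ = C a * (C c * h) ^ 2 := by
            rw [mul_pow, ← mul_assoc, ← map_pow, hCC, map_neg]; ring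
    have hzero : (g - C c * h) * (g + C c * h) = 0 := by linear_combination hsq
    rcases mul_eq_zero.1 hzero with h1 | h1
    · have := hpair 1 (-c) (by rw [smul_eq_C_mul, smul_eq_C_mul, map_one, map_neg]
                               linear_combination h1)
      exact one_ne_zero this.1
    · have := hpair 1 c (by rw [smul_eq_C_mul, smul_eq_C_mul, map_one]
                            linear_combination h1)
      exact one_ne_zero this.1

lemma core (d : ℕ) (hd : 1 ≤ d) (g h : R) (hg : g.IsHomogeneous d) (hh : h.IsHomogeneous d)
    (hpair : ∀ s t : ℂ, s • g + t • h = 0 → s = 0 ∧ t = 0)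
    (l₁ m₁ l₂ m₂ : ℂ) (hl₁ : l₁ ≠ 0) (hm₁ : m₁ ≠ 0) (hl₂ : l₂ ≠ 0) (hm₂ : m₂ ≠ 0)
    (hdet : l₁ * m₂ - l₂ * m₁ ≠ 0)
    (f₁ f₂ : R) (hf₁ : f₁.IsHomogeneous d) (hf₂ : f₂.IsHomogeneous d)
    (e₁ : C l₁ * g ^ 2 + C m₁ * h ^ 2 = f₁ ^ 2)
    (e₂ : C l₂ * g ^ 2 + C m₂ * h ^ 2 = f₂ ^ 2) : False := by
  classical
  letI : GCDMonoid R := UniqueFactorizationMonoid.toGCDMonoid R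
  haveI : IsIntegrallyClosed R := GCDMonoid.toIsIntegrallyClosed
  have hg0 : g ≠ 0 := fun h0 => one_ne_zero (hpair 1 0 (by simp [h0])).1
  have hh0 : h ≠ 0 := fun h0 => one_ne_zero (hpair 0 1 (by simp [h0])).2
  have hC : ∀ x : ℂ, x ≠ 0 → (C x : R) ≠ 0 :=
    fun x hx h0 => hx (C_injective _ _ (by rw [h0, map_zero]))
  have hf₁0 : f₁ ≠ 0 := by
    intro h0
    rw [h0] at e₁
    exact hl₁ (sq_indep hg0 hh0 hpair (by rw [e₁]; ring)).1
  have hf₂0 : f₂ ≠ 0 := by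
    intro h0
    rw [h0] at e₂
    exact hl₂ (sq_indep hg0 hh0 hpair (by rw [e₂]; ring)).1
  -- gcd reduction
  set p := gcd g h with hpdef
  have hp0 : p ≠ 0 := fun h0 => hg0 ((gcd_eq_zero_iff g h).1 h0).1
  obtain ⟨g₁, hgg⟩ : p ∣ g := gcd_dvd_left g h
  obtain ⟨h₁, hhh⟩ : p ∣ h := gcd_dvd_right g h
  have hg₁0 : g₁ ≠ 0 := by rintro rfl; rw [mul_zero] at hgg; exact hg0 hgg
  have hh₁0 : h₁ ≠ 0 := by rintro rfl; rw [mul_zero] at hhh; exact hh0 hhh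
  have hrel : IsRelPrime g₁ h₁ := by
    intro q hq1 hq2
    have hdq : p * q ∣ p := dvd_gcd (hgg ▸ mul_dvd_mul_left p hq1) (hhh ▸ mul_dvd_mul_left p hq2)
    rw [show p = p * 1 by ring] at hdq
    exact isUnit_of_dvd_one ((mul_dvd_mul_iff_left hp0).1 (by simpa using hdq))
  -- p divides f₁, f₂
  have hpf : ∀ (lam mu : ℂ) (f : R), C lam * g ^ 2 + C mu * h ^ 2 = f ^ 2 → p ∣ f := by
    intro lam mu f he
    have hpg : p ^ 2 ∣ g ^ 2 := ⟨g₁ ^ 2, by rw [hgg, mul_pow]⟩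
    have hph : p ^ 2 ∣ h ^ 2 := ⟨h₁ ^ 2, by rw [hhh, mul_pow]⟩
    have h2 : p ^ 2 ∣ f ^ 2 := by
      rw [← he]; exact dvd_add (hpg.mul_left _) (hph.mul_left _)
    exact (IsIntegrallyClosed.pow_dvd_pow_iff two_ne_zero).1 h2
  obtain ⟨φ₁, hfp₁⟩ := hpf l₁ m₁ f₁ e₁
  obtain ⟨φ₂, hfp₂⟩ := hpf l₂ m₂ f₂ e₂
  have hφ₁0 : φ₁ ≠ 0 := by rintro rfl; rw [mul_zero] at hfp₁; exact hf₁0 hfp₁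
  have hφ₂0 : φ₂ ≠ 0 := by rintro rfl; rw [mul_zero] at hfp₂; exact hf₂0 hfp₂
  -- degrees
  set m := g₁.totalDegree with hmdef
  have hdg : p.totalDegree + m = d := by
    rw [← totalDegree_mul_eq hp0 hg₁0, ← hgg, hg.totalDegree hg0]
  have hdh : h₁.totalDegree = m := by
    have : p.totalDegree + h₁.totalDegree = d := by
      rw [← totalDegree_mul_eq hp0 hh₁0, ← hhh, hh.totalDegree hh0]
    omega
  have hdφ₁ : φ₁.totalDegree = m := by
    have : p.totalDegree + φ₁.totalDegree = d := by
      rw [← totalDegree_mul_eq hp0 hφ₁0, ← hfp₁, hf₁.totalDegree hf₁0]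
    omega
  have hdφ₂ : φ₂.totalDegree = m := by
    have : p.totalDegree + φ₂.totalDegree = d := by
      rw [← totalDegree_mul_eq hp0 hφ₂0, ← hfp₂, hf₂.totalDegree hf₂0]
    omega
  have hm1 : 1 ≤ m := by
    rcases Nat.eq_zero_or_pos m with h0 | h0
    · exfalso
      have hga : g₁ = C (coeff 0 g₁) := eq_C_of_tot_zero (by omega)
      have hhb : h₁ = C (coeff 0 h₁) := eq_C_of_tot_zero (by omega)
      have := hpair (coeff 0 h₁) (-(coeff 0 g₁)) (by
        rw [smul_eq_C_mul, smul_eq_C_mul, hgg, hhh, map_neg]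
        nth_rewrite 1 [hga]; nth_rewrite 2 [hhb]
        ring)
      have hga0 : coeff 0 g₁ = 0 := neg_eq_zero.1 this.2
      exact hg₁0 (by rw [hga, hga0, map_zero])
    · exact h0
  -- reduced equations
  have hred : ∀ (lam mu : ℂ) (f φ : R), C lam * g ^ 2 + C mu * h ^ 2 = f ^ 2 → f = p * φ →
      C lam * g₁ ^ 2 + C mu * h₁ ^ 2 = φ ^ 2 := by
    intro lam mu f φ he hf
    apply mul_left_cancel₀ (pow_ne_zero 2 hp0)
    rw [hf, hgg, hhh] at he
    linear_combination he
  have E₁ := hred l₁ m₁ f₁ φ₁ e₁ hfp₁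
  have E₂ := hred l₂ m₂ f₂ φ₂ e₂ hfp₂
  have h2R : (2 : R) ≠ 0 := by
    have h2C : (2 : R) = C (2 : ℂ) := (map_ofNat C 2).symm
    rw [h2C]
    exact hC 2 two_ne_zero
  -- choose a direction with nonzero Wronskian
  have hWj : ∃ j : Fin 2, g₁ * pderiv j h₁ - h₁ * pderiv j g₁ ≠ 0 := by
    by_contra h0
    push_neg at h0
    have hDg : ∀ j, pderiv j g₁ = 0 := by
      intro j
      have hw : g₁ * pderiv j h₁ = h₁ * pderiv j g₁ := sub_eq_zero.1 (h0 j)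
      have hdvd : g₁ ∣ pderiv j g₁ :=
        hrel.dvd_of_dvd_mul_left ⟨pderiv j h₁, hw.symm⟩
      by_contra hne
      have h1 := totalDegree_le_of_dvd hdvd hne
      have h2 := totalDegree_pderiv_lt hne
      omega
    obtain ⟨j, hj⟩ := exists_pderiv_ne_zero (f := g₁) (by omega)
    exact hj (hDg j)
  obtain ⟨j, hW⟩ := hWj
  set W : R := g₁ * pderiv j h₁ - h₁ * pderiv j g₁ with hWdef
  -- derivative identities and divisibility
  have Dsq : ∀ u : R, pderiv j (u ^ 2) = 2 * (u * pderiv j u) := by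
    intro u; rw [pow_two, pderiv_mul]; ring
  have hdvdW : ∀ (lam mu : ℂ) (φ : R), mu ≠ 0 → lam ≠ 0 → φ ≠ 0 →
      C lam * g₁ ^ 2 + C mu * h₁ ^ 2 = φ ^ 2 → φ ∣ W := by
    intro lam mu φ hmu hlam hφ0 hE
    have t : C lam * (2 * (g₁ * pderiv j g₁)) + C mu * (2 * (h₁ * pderiv j h₁)) =
        2 * (φ * pderiv j φ) := by
      rw [← Dsq, ← Dsq, ← Dsq, ← pderiv_C_mul, ← pderiv_C_mul, ← map_add, hE]
    have E' : φ * pderiv j φ = C lam * (g₁ * pderiv j g₁) + C mu * (h₁ * pderiv j h₁) := by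
      apply mul_left_cancel₀ h2R
      linear_combination -t
    have keyh : φ * (φ * pderiv j g₁ - g₁ * pderiv j φ) = -(C mu * (h₁ * W)) := by
      rw [hWdef]
      linear_combination (-(pderiv j g₁)) * hE - g₁ * E'
    have keyg : φ * (φ * pderiv j h₁ - h₁ * pderiv j φ) = C lam * (g₁ * W) := by
      rw [hWdef]
      linear_combination (-(pderiv j h₁)) * hE - h₁ * E'
    have hdh : φ ∣ h₁ * W :=
      (((isUnit_iff_ne_zero.2 hmu).map C).dvd_mul_left).1 (dvd_neg.1 ⟨_, keyh.symm⟩)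
    have hdg : φ ∣ g₁ * W :=
      (((isUnit_iff_ne_zero.2 hlam).map C).dvd_mul_left).1 ⟨_, keyg.symm⟩
    have h1 : φ ∣ gcd (g₁ * W) (h₁ * W) := dvd_gcd hdg hdh
    have h2 : Associated (gcd (g₁ * W) (h₁ * W)) (gcd g₁ h₁ * W) := gcd_mul_right' W g₁ h₁
    have h3 : IsUnit (gcd g₁ h₁) := hrel (gcd_dvd_left _ _) (gcd_dvd_right _ _)
    exact (h3.dvd_mul_left).1 (h1.trans h2.dvd)
  have hφW₁ : φ₁ ∣ W := hdvdW l₁ m₁ φ₁ hm₁ hl₁ hφ₁0 E₁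
  have hφW₂ : φ₂ ∣ W := hdvdW l₂ m₂ φ₂ hm₂ hl₂ hφ₂0 E₂
  -- φ₁ and φ₂ are relatively prime
  have hrelφ : IsRelPrime φ₁ φ₂ := by
    intro q hq1 hq2
    have hQ1 : q ^ 2 ∣ φ₁ ^ 2 := pow_dvd_pow_of_dvd hq1 2
    have hQ2 : q ^ 2 ∣ φ₂ ^ 2 := pow_dvd_pow_of_dvd hq2 2
    have hgsq : C (l₁ * m₂ - l₂ * m₁) * g₁ ^ 2 = C m₂ * φ₁ ^ 2 - C m₁ * φ₂ ^ 2 := by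
      rw [map_sub, map_mul, map_mul]
      linear_combination C m₂ * E₁ - C m₁ * E₂
    have hhsq : C (l₁ * m₂ - l₂ * m₁) * h₁ ^ 2 = C l₁ * φ₂ ^ 2 - C l₂ * φ₁ ^ 2 := by
      rw [map_sub, map_mul, map_mul]
      linear_combination C l₁ * E₂ - C l₂ * E₁
    have hqg : q ∣ g₁ := by
      have hq : q ^ 2 ∣ C (l₁ * m₂ - l₂ * m₁) * g₁ ^ 2 := by
        rw [hgsq]; exact dvd_sub (hQ1.mul_left _) (hQ2.mul_left _)
      have := (((isUnit_iff_ne_zero.2 hdet).map C).dvd_mul_left).1 hq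
      exact (IsIntegrallyClosed.pow_dvd_pow_iff two_ne_zero).1 this
    have hqh : q ∣ h₁ := by
      have hq : q ^ 2 ∣ C (l₁ * m₂ - l₂ * m₁) * h₁ ^ 2 := by
        rw [hhsq]; exact dvd_sub (hQ2.mul_left _) (hQ1.mul_left _)
      have := (((isUnit_iff_ne_zero.2 hdet).map C).dvd_mul_left).1 hq
      exact (IsIntegrallyClosed.pow_dvd_pow_iff two_ne_zero).1 this
    exact hrel hqg hqh
  -- final degree contradiction
  have hmul : φ₁ * φ₂ ∣ W := hrelφ.mul_dvd hφW₁ hφW₂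
  have h2m : 2 * m ≤ W.totalDegree := by
    have h1 := totalDegree_le_of_dvd hmul hW
    rw [totalDegree_mul_eq hφ₁0 hφ₂0, hdφ₁, hdφ₂] at h1
    omega
  have hb : ∀ u v : R, u.totalDegree = m → v.totalDegree = m →
      (u * pderiv j v).totalDegree ≤ 2 * m - 1 := by
    intro u v hu hv
    rcases eq_or_ne (pderiv j v) 0 with h0 | h0
    · rw [h0, mul_zero, totalDegree_zero]; omega
    · have h1 := totalDegree_mul u (pderiv j v)
      have h2 := totalDegree_pderiv_lt h0
      omega
  have hWle : W.totalDegree ≤ 2 * m - 1 := by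
    rw [hWdef]
    refine le_trans (totalDegree_sub _ _) (max_le ?_ ?_)
    · exact hb g₁ h₁ rfl hdh
    · exact hb h₁ g₁ hdh rfl
  omega

end Stmt7Core

open Stmt7Core

/-- For linearly independent degree-`d` binary forms `g, h`, the set of points
`(λ:μ) ∈ ℙ¹` such that `λg² + μh²` is the square of a degree-`d` form has at most `3`
elements.  Equivalently, the image of the quadratic Veronese `q : P_d → P_{2d}`,
`[f] ↦ [f²]`, contains no four collinear points: a line through two distinct points
`[g²], [h²]` of the image meets it in at most `3` points. -/
theorem stmt_7 (d : ℕ) (hd : 1 ≤ d) (g h : MvPolynomial (Fin 2) ℂ)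
    (hg : g.IsHomogeneous d) (hh : h.IsHomogeneous d)
    (hind : LinearIndependent ℂ ![g, h]) :
    ∃ s : Finset (ℂ × ℂ), s.card ≤ 3 ∧
      ∀ c : ℂ × ℂ, c ≠ 0 →
        (∃ f : MvPolynomial (Fin 2) ℂ, f.IsHomogeneous d ∧
            c.1 • g ^ 2 + c.2 • h ^ 2 = f ^ 2) →
        ∃ a ∈ s, ∃ t : ℂ, c = t • a := by
  classical
  have hpair : ∀ s t : ℂ, s • g + t • h = 0 → s = 0 ∧ t = 0 :=
    fun s t hst => LinearIndependent.pair_iff.1 hind s t hst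
  by_cases hP : ∃ c₀ : ℂ × ℂ, (c₀.1 ≠ 0 ∧ c₀.2 ≠ 0) ∧
      ∃ f : MvPolynomial (Fin 2) ℂ, f.IsHomogeneous d ∧
        c₀.1 • g ^ 2 + c₀.2 • h ^ 2 = f ^ 2
  · obtain ⟨c₀, ⟨hc₁, hc₂⟩, f₀, hf₀, he₀⟩ := hP
    refine ⟨{((1 : ℂ), (0 : ℂ)), ((0 : ℂ), (1 : ℂ)), c₀}, ?_, ?_⟩
    · exact le_trans (Finset.card_insert_le _ _) (by
        exact Nat.succ_le_succ (le_trans (Finset.card_insert_le _ _)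
          (Nat.succ_le_succ (Finset.card_singleton _).le)))
    · intro c hc ⟨f, hf, he⟩
      by_cases h2 : c.2 = 0
      · refine ⟨(1, 0), by simp, c.1, ?_⟩
        ext <;> simp [h2]
      by_cases h1 : c.1 = 0
      · refine ⟨(0, 1), by simp, c.2, ?_⟩
        ext <;> simp [h1]
      · refine ⟨c₀, by simp, c.1 / c₀.1, ?_⟩
        have hkey : c₀.1 * c.2 - c.1 * c₀.2 = 0 := by
          by_contra hdet
          exact core d hd g h hg hh hpair c₀.1 c₀.2 c.1 c.2 hc₁ hc₂ h1 h2 hdet f₀ f hf₀ hf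
            (by rw [← MvPolynomial.smul_eq_C_mul, ← MvPolynomial.smul_eq_C_mul]; exact he₀)
            (by rw [← MvPolynomial.smul_eq_C_mul, ← MvPolynomial.smul_eq_C_mul]; exact he)
        have : c.2 = c.1 / c₀.1 * c₀.2 := by
          field_simp
          linear_combination hkey
        ext
        · simp [Prod.smul_def]; field_simp
        · simpa [Prod.smul_def] using this
  · refine ⟨{((1 : ℂ), (0 : ℂ)), ((0 : ℂ), (1 : ℂ))}, ?_, ?_⟩
    · exact le_trans (Finset.card_insert_le _ _) (by
        simpa using Nat.le_succ 2)
    · intro c hc ⟨f, hf, he⟩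
      by_cases h2 : c.2 = 0
      · refine ⟨(1, 0), by simp, c.1, ?_⟩
        ext <;> simp [h2]
      by_cases h1 : c.1 = 0
      · refine ⟨(0, 1), by simp, c.2, ?_⟩
        ext <;> simp [h1]
      · exact absurd ⟨c, ⟨h1, h2⟩, f, hf, he⟩ hP
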